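/- (Szemerédi's regularity lemma.) For each ε > 0 and each finite simple graph G = (V, E), every partition P of V has a refinement that is both ε-balanced and ε-regular and has at most f_ε^{⌊ε⁻⁵⌋}((1 + ε⁻¹)·|P|) classes, where f_ε(x) := (1 + ε⁻¹)·x·4^x and f_ε^n denotes the n-th iterate of f_ε. -/

import Mathlib

open Finset

/-- `P` is a partition of the finite type `V`. -/
def IsPartition {V : Type*} [Fintype V] [DecidableEq V] (P : Finset (Finset V)) : Prop :=
  (∀ I ∈ P, I.Nonempty) ∧
  (∀ I ∈ P, ∀ J ∈ P, I ≠ J → Disjoint I J) ∧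
  P.sup id = Finset.univ

/-- `Q` is a refinement of `P`. -/
def IsRefinement {V : Type*} [Fintype V] [DecidableEq V] (Q P : Finset (Finset V)) : Prop :=
  ∀ J ∈ Q, ∃ I ∈ P, J ⊆ I

/-- `P` is `ε`-balanced: `P` contains a subcollection `C` of equal-sized sets with
`|V \ ⋃ C| ≤ ε |V|`. -/
def IsBalanced {V : Type*} [Fintype V] [DecidableEq V] (ε : ℝ) (P : Finset (Finset V)) : Prop :=
  ∃ C ⊆ P, (∀ X ∈ C, ∀ Y ∈ C, X.card = Y.card) ∧
    ((Finset.univ \ C.sup id).card : ℝ) ≤ ε * Fintype.card V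

/-- The edge density of the pair `(I, J)` in the graph `G`. -/
noncomputable def density {V : Type*} [Fintype V] [DecidableEq V] (G : SimpleGraph V)
    [DecidableRel G.Adj] (I J : Finset V) : ℝ :=
  (((I ×ˢ J).filter fun p => G.Adj p.1 p.2).card : ℝ) / (I.card * J.card)

/-- The pair `(I, J)` is `ε`-regular. -/
def IsRegularPair {V : Type*} [Fintype V] [DecidableEq V] (G : SimpleGraph V)
    [DecidableRel G.Adj] (ε : ℝ) (I J : Finset V) : Prop :=
  ∀ X ⊆ I, ∀ Y ⊆ J, (X.card : ℝ) > ε * I.card → (Y.card : ℝ) > ε * J.card →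
    |density G X Y - density G I J| ≤ ε

open scoped Classical in
/-- The partition `P` is `ε`-regular. -/
noncomputable def IsRegularPartition {V : Type*} [Fintype V] [DecidableEq V] (G : SimpleGraph V)
    [DecidableRel G.Adj] (ε : ℝ) (P : Finset (Finset V)) : Prop :=
  ∑ I ∈ P, ∑ J ∈ P, (if IsRegularPair G ε I J then 0 else (I.card * J.card : ℝ))
    ≤ ε * (Fintype.card V) ^ 2

/-- The bound function `f_ε(x) = (1 + ε⁻¹) x 4^x`. -/
noncomputable def boundFun (ε : ℝ) (x : ℝ) : ℝ := (1 + ε⁻¹) * x * (4 : ℝ) ^ x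

set_option linter.unusedSectionVars false
set_option maxHeartbeats 1000000

namespace SRLwork
variable {V : Type*} [Fintype V] [DecidableEq V] (G : SimpleGraph V) [DecidableRel G.Adj]

def pc (A B : Finset V) : ℕ := ((A ×ˢ B).filter fun p => G.Adj p.1 p.2).card

lemma density_eq (A B : Finset V) : density G A B = (pc G A B : ℝ) / (A.card * B.card) := rfl

noncomputable def eng (A B : Finset V) : ℝ := (pc G A B : ℝ) ^ 2 / (A.card * B.card)

lemma pc_le (A B : Finset V) : pc G A B ≤ A.card * B.card := by
  classical
  calc pc G A B ≤ (A ×ˢ B).card := card_filter_le _ _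
  _ = A.card * B.card := card_product A B

lemma eng_nonneg (A B : Finset V) : 0 ≤ eng G A B := by
  unfold eng; positivity

lemma eng_le_w (A B : Finset V) : eng G A B ≤ (A.card : ℝ) * B.card := by
  unfold eng
  rcases eq_or_lt_of_le (by positivity : (0:ℝ) ≤ (A.card : ℝ) * B.card) with h | h
  · rw [← h]; simp
  · rw [div_le_iff₀ h]
    have h2 : (pc G A B : ℝ) ≤ (A.card : ℝ) * B.card := by exact_mod_cast pc_le G A B
    have h3 : (0:ℝ) ≤ (pc G A B : ℝ) := Nat.cast_nonneg _
    nlinarith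

lemma pc_sum_left {A : Finset V} (π : Finpartition A) (B : Finset V) :
    pc G A B = ∑ a ∈ π.parts, pc G a B := by
  classical
  unfold pc
  rw [← card_biUnion]
  · congr 1
    ext ⟨x, y⟩
    simp only [mem_filter, mem_product, mem_biUnion]
    constructor
    · rintro ⟨⟨hx, hy⟩, hadj⟩
      obtain ⟨a, ha, hxa⟩ := π.exists_mem hx
      exact ⟨a, ha, ⟨⟨hxa, hy⟩, hadj⟩⟩
    · rintro ⟨a, ha, ⟨⟨hxa, hy⟩, hadj⟩⟩
      exact ⟨⟨π.le ha hxa, hy⟩, hadj⟩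
  · intro a ha b hb hab
    refine disjoint_left.2 ?_
    rintro ⟨x, y⟩ hxa hxb
    simp only [mem_filter, mem_product] at hxa hxb
    exact disjoint_left.1 (π.disjoint ha hb hab) hxa.1.1 hxb.1.1

lemma pc_sum_right (A : Finset V) {B : Finset V} (σ : Finpartition B) :
    pc G A B = ∑ b ∈ σ.parts, pc G A b := by
  classical
  unfold pc
  rw [← card_biUnion]
  · congr 1
    ext ⟨x, y⟩
    simp only [mem_filter, mem_product, mem_biUnion]
    constructor
    · rintro ⟨⟨hx, hy⟩, hadj⟩
      obtain ⟨b, hb, hyb⟩ := σ.exists_mem hy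
      exact ⟨b, hb, ⟨⟨hx, hyb⟩, hadj⟩⟩
    · rintro ⟨b, hb, ⟨⟨hx, hyb⟩, hadj⟩⟩
      exact ⟨⟨hx, σ.le hb hyb⟩, hadj⟩
  · intro a ha b hb hab
    refine disjoint_left.2 ?_
    rintro ⟨x, y⟩ hxa hxb
    simp only [mem_filter, mem_product] at hxa hxb
    exact disjoint_left.1 (σ.disjoint ha hb hab) hxa.1.2 hxb.1.2

lemma pc_sum {A B : Finset V} (π : Finpartition A) (σ : Finpartition B) :
    pc G A B = ∑ a ∈ π.parts, ∑ b ∈ σ.parts, pc G a b := by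
  rw [pc_sum_left G π B]
  exact Finset.sum_congr rfl fun a _ => pc_sum_right G a σ

lemma sum_w {A B : Finset V} (π : Finpartition A) (σ : Finpartition B) :
    ∑ a ∈ π.parts, ∑ b ∈ σ.parts, ((a.card : ℝ) * b.card) = (A.card : ℝ) * B.card := by
  rw [← Finset.sum_mul_sum]
  have h1 : ∑ a ∈ π.parts, (a.card : ℝ) = (A.card : ℝ) := by
    exact_mod_cast congrArg (Nat.cast (R := ℝ)) π.sum_card_parts
  have h2 : ∑ b ∈ σ.parts, (b.card : ℝ) = (B.card : ℝ) := by
    exact_mod_cast congrArg (Nat.cast (R := ℝ)) σ.sum_card_parts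
  rw [h1, h2]


lemma eng_le_sum {A B : Finset V} (π : Finpartition A) (σ : Finpartition B) :
    eng G A B ≤ ∑ a ∈ π.parts, ∑ b ∈ σ.parts, eng G a b := by
  have hpos : ∀ p ∈ π.parts ×ˢ σ.parts, (0:ℝ) < (p.1.card : ℝ) * p.2.card := by
    rintro ⟨a, b⟩ hp
    rw [mem_product] at hp
    have ha := π.nonempty_of_mem_parts hp.1
    have hb := σ.nonempty_of_mem_parts hp.2
    have := card_pos.2 ha; have := card_pos.2 hb
    positivity
  have h := sq_sum_div_le_sum_sq_div (π.parts ×ˢ σ.parts)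
      (fun p => (pc G p.1 p.2 : ℝ)) hpos
  have h1 : (pc G A B : ℝ) = ∑ p ∈ π.parts ×ˢ σ.parts, (pc G p.1 p.2 : ℝ) := by
    rw [Finset.sum_product]
    exact_mod_cast congrArg (Nat.cast (R := ℝ)) (pc_sum G π σ)
  have h2 : ((A.card : ℝ) * B.card) = ∑ p ∈ π.parts ×ˢ σ.parts, ((p.1.card : ℝ) * p.2.card) := by
    rw [Finset.sum_product]; exact (sum_w π σ).symm
  have h3 : ∑ p ∈ π.parts ×ˢ σ.parts, ((pc G p.1 p.2 : ℝ))^2 / ((p.1.card:ℝ) * p.2.card)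
      = ∑ a ∈ π.parts, ∑ b ∈ σ.parts, eng G a b := by
    rw [Finset.sum_product]; rfl
  rw [eng, h1, h2, ← h3]
  exact h

lemma eng_decomp {A B : Finset V} (hA : A.Nonempty) (hB : B.Nonempty)
    (π : Finpartition A) (σ : Finpartition B) :
    ∑ a ∈ π.parts, ∑ b ∈ σ.parts, eng G a b
      = eng G A B + ∑ a ∈ π.parts, ∑ b ∈ σ.parts,
          ((a.card : ℝ) * b.card) * (density G a b - density G A B) ^ 2 := by
  have hwA : (0:ℝ) < (A.card : ℝ) * B.card := by
    have := card_pos.2 hA; have := card_pos.2 hB; positivity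
  set μ := density G A B with hμdef
  have key : ∀ a ∈ π.parts, ∀ b ∈ σ.parts,
      ((a.card : ℝ) * b.card) * (density G a b - μ) ^ 2
        = eng G a b - 2 * μ * (pc G a b : ℝ) + μ ^ 2 * ((a.card : ℝ) * b.card) := by
    intro a ha b hb
    have hw : (0:ℝ) < (a.card : ℝ) * b.card := by
      have := card_pos.2 (π.nonempty_of_mem_parts ha)
      have := card_pos.2 (σ.nonempty_of_mem_parts hb)
      positivity
    have ha0 : (a.card : ℝ) ≠ 0 := by
      have := card_pos.2 (π.nonempty_of_mem_parts ha); positivity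
    have hb0 : (b.card : ℝ) ≠ 0 := by
      have := card_pos.2 (σ.nonempty_of_mem_parts hb); positivity
    rw [eng, density_eq]
    field_simp
    ring
  have hsum : ∑ a ∈ π.parts, ∑ b ∈ σ.parts,
      ((a.card : ℝ) * b.card) * (density G a b - μ) ^ 2
      = (∑ a ∈ π.parts, ∑ b ∈ σ.parts, eng G a b)
        - 2 * μ * (pc G A B : ℝ) + μ ^ 2 * ((A.card : ℝ) * B.card) := by
    have hpcc : (pc G A B : ℝ) = ∑ a ∈ π.parts, ∑ b ∈ σ.parts, (pc G a b : ℝ) := by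
      exact_mod_cast congrArg (Nat.cast (R := ℝ)) (pc_sum G π σ)
    rw [hpcc, ← sum_w π σ]
    rw [Finset.mul_sum, Finset.mul_sum, ← Finset.sum_sub_distrib, ← Finset.sum_add_distrib]
    refine Finset.sum_congr rfl fun a ha => ?_
    rw [Finset.mul_sum, Finset.mul_sum, ← Finset.sum_sub_distrib, ← Finset.sum_add_distrib]
    exact Finset.sum_congr rfl fun b hb => key a ha b hb
  rw [hsum]
  have hengAB : eng G A B = μ ^ 2 * ((A.card : ℝ) * B.card) := by
    rw [eng, hμdef, density_eq]
    field_simp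
  have hpcAB : (pc G A B : ℝ) = μ * ((A.card : ℝ) * B.card) := by
    rw [hμdef, density_eq]; field_simp
  rw [hengAB, hpcAB]
  ring

lemma eng_boost {A B a b : Finset V} (hA : A.Nonempty) (hB : B.Nonempty)
    (π : Finpartition A) (σ : Finpartition B) (ha : a ∈ π.parts) (hb : b ∈ σ.parts) :
    eng G A B + ((a.card : ℝ) * b.card) * (density G a b - density G A B) ^ 2
      ≤ ∑ x ∈ π.parts, ∑ y ∈ σ.parts, eng G x y := by
  rw [eng_decomp G hA hB π σ]
  refine add_le_add le_rfl ?_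
  calc ((a.card : ℝ) * b.card) * (density G a b - density G A B) ^ 2
      ≤ ∑ y ∈ σ.parts, ((a.card : ℝ) * y.card) * (density G a y - density G A B) ^ 2 :=
        Finset.single_le_sum (f := fun y => ((a.card : ℝ) * y.card) * (density G a y - density G A B) ^ 2) (fun y _ => by positivity) hb
    _ ≤ _ := Finset.single_le_sum (f := fun x => ∑ y ∈ σ.parts,
          ((x.card : ℝ) * y.card) * (density G x y - density G A B) ^ 2)
          (fun x _ => Finset.sum_nonneg fun y _ => by positivity) ha


/-- Grouping a refinement's parts by the coarse parts containing them. -/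
lemma group_sum {A : Finset V} (π ρ : Finpartition A)
    (h : ∀ p ∈ π.parts, ∃ r ∈ ρ.parts, p ⊆ r) (f : Finset V → ℝ) :
    ∑ p ∈ π.parts, f p = ∑ r ∈ ρ.parts, ∑ p ∈ π.parts.filter (· ⊆ r), f p := by
  classical
  have hd : (ρ.parts : Set (Finset V)).PairwiseDisjoint
      (fun r => π.parts.filter (· ⊆ r)) := by
    intro r hr t ht hrt
    refine disjoint_left.2 fun p hpr hpt => ?_
    obtain ⟨x, hx⟩ := π.nonempty_of_mem_parts (mem_filter.1 hpr).1
    exact disjoint_left.1 (ρ.disjoint hr ht hrt) ((mem_filter.1 hpr).2 hx)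
      ((mem_filter.1 hpt).2 hx)
  have hset : π.parts = ρ.parts.biUnion (fun r => π.parts.filter (· ⊆ r)) := by
    ext p
    simp only [mem_biUnion, mem_filter]
    constructor
    · intro hp
      obtain ⟨r, hr, hpr⟩ := h p hp
      exact ⟨r, hr, hp, hpr⟩
    · rintro ⟨r, hr, hp, hpr⟩
      exact hp
  conv_lhs => rw [hset]
  exact Finset.sum_biUnion hd

/-- Restriction of a refinement to a coarse part. -/
def restr {A : Finset V} (π ρ : Finpartition A)
    (h : ∀ p ∈ π.parts, ∃ r ∈ ρ.parts, p ⊆ r) (r : Finset V) (hr : r ∈ ρ.parts) :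
    Finpartition r where
  parts := π.parts.filter (· ⊆ r)
  supIndep := π.supIndep.subset (filter_subset _ _)
  sup_parts := by
    refine le_antisymm (Finset.sup_le fun p hp => (mem_filter.1 hp).2) ?_
    intro x hx
    obtain ⟨p, hp, hxp⟩ := π.exists_mem (ρ.le hr hx)
    obtain ⟨r', hr', hpr'⟩ := h p hp
    have hrr : r' = r := by
      by_contra hne
      exact disjoint_left.1 (ρ.disjoint hr' hr hne) (hpr' hxp) hx
    have hmem : p ∈ π.parts.filter (· ⊆ r) := mem_filter.2 ⟨hp, hrr ▸ hpr'⟩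
    exact (Finset.le_sup (f := id) hmem) hxp
  bot_notMem := fun hmem => π.bot_notMem (mem_filter.1 hmem).1

@[simp] lemma restr_parts {A : Finset V} (π ρ : Finpartition A)
    (h : ∀ p ∈ π.parts, ∃ r ∈ ρ.parts, p ⊆ r) (r : Finset V) (hr : r ∈ ρ.parts) :
    (restr π ρ h r hr).parts = π.parts.filter (· ⊆ r) := rfl

lemma sum_pairs_eq {A B : Finset V} (π ρ : Finpartition A) (σ τ : Finpartition B)
    (h1 : ∀ p ∈ π.parts, ∃ r ∈ ρ.parts, p ⊆ r)
    (h2 : ∀ q ∈ σ.parts, ∃ t ∈ τ.parts, q ⊆ t) :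
    ∑ p ∈ π.parts, ∑ q ∈ σ.parts, eng G p q
      = ∑ r ∈ ρ.parts, ∑ t ∈ τ.parts, ∑ p ∈ π.parts.filter (· ⊆ r),
          ∑ q ∈ σ.parts.filter (· ⊆ t), eng G p q := by
  rw [group_sum π ρ h1 (fun p => ∑ q ∈ σ.parts, eng G p q)]
  refine Finset.sum_congr rfl fun r hr => ?_
  have : ∀ p ∈ π.parts.filter (· ⊆ r), ∑ q ∈ σ.parts, eng G p q
      = ∑ t ∈ τ.parts, ∑ q ∈ σ.parts.filter (· ⊆ t), eng G p q :=
    fun p _ => group_sum σ τ h2 (eng G p)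
  rw [Finset.sum_congr rfl this]
  exact Finset.sum_comm

lemma sum_pairs_le {A B : Finset V} (π ρ : Finpartition A) (σ τ : Finpartition B)
    (h1 : ∀ p ∈ π.parts, ∃ r ∈ ρ.parts, p ⊆ r)
    (h2 : ∀ q ∈ σ.parts, ∃ t ∈ τ.parts, q ⊆ t) :
    ∑ r ∈ ρ.parts, ∑ t ∈ τ.parts, eng G r t
      ≤ ∑ p ∈ π.parts, ∑ q ∈ σ.parts, eng G p q := by
  rw [sum_pairs_eq G π ρ σ τ h1 h2]
  refine Finset.sum_le_sum fun r hr => Finset.sum_le_sum fun t ht => ?_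
  exact eng_le_sum G (restr π ρ h1 r hr) (restr σ τ h2 t ht)

/-- The two-set split partition. -/
def split {A X : Finset V} (hX : X ⊆ A) : Finpartition A :=
  Finpartition.ofErase {X, A \ X}
    (by
      rw [Finset.supIndep_iff_pairwiseDisjoint]
      intro a ha b hb hne
      simp only [coe_insert, coe_singleton, Set.mem_insert_iff, Set.mem_singleton_iff]
        at ha hb
      rcases ha with rfl | rfl <;> rcases hb with rfl | rfl
      · exact absurd rfl hne
      · exact Finset.disjoint_sdiff
      · exact Finset.sdiff_disjoint
      · exact absurd rfl hne)
    (by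
      rw [Finset.sup_insert, Finset.sup_singleton]
      simp only [id]
      exact Finset.union_sdiff_of_subset hX)

lemma mem_split_left {A X : Finset V} (hX : X ⊆ A) (hne : X.Nonempty) :
    X ∈ (split hX).parts :=
  Finset.mem_erase.2 ⟨by simpa [Finset.bot_eq_empty] using hne.ne_empty,
    Finset.mem_insert_self _ _⟩

lemma mem_split_right {A X : Finset V} (hX : X ⊆ A) (hne : (A \ X).Nonempty) :
    A \ X ∈ (split hX).parts :=
  Finset.mem_erase.2 ⟨by simpa [Finset.bot_eq_empty] using hne.ne_empty,
    Finset.mem_insert_of_mem (Finset.mem_singleton_self _)⟩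

lemma refines_split {A X : Finset V} (hX : X ⊆ A) (π : Finpartition A)
    (hπ : ∀ p ∈ π.parts, p ⊆ X ∨ p ⊆ A \ X) :
    ∀ p ∈ π.parts, ∃ r ∈ (split hX).parts, p ⊆ r := by
  intro p hp
  have hpne := π.nonempty_of_mem_parts hp
  rcases hπ p hp with h | h
  · exact ⟨X, mem_split_left hX (hpne.mono h), h⟩
  · exact ⟨A \ X, mem_split_right hX (hpne.mono h), h⟩

/-- Atoms respect the cutting sets. -/
lemma atom_sub {I p : Finset V} {F : Finset (Finset V)}
    (hp : p ∈ (Finpartition.atomise I F).parts) {X : Finset V} (hX : X ∈ F) :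
    p ⊆ X ∨ p ⊆ I \ X := by
  obtain ⟨hne, Q, hQF, rfl⟩ := (Finpartition.mem_atomise.1 hp)
  by_cases hXQ : X ∈ Q
  · left
    intro i hi
    simp only [mem_filter] at hi
    exact (hi.2 X hX).1 hXQ
  · right
    intro i hi
    simp only [mem_filter] at hi
    refine Finset.mem_sdiff.2 ⟨hi.1, fun hiX => hXQ ?_⟩
    exact (hi.2 X hX).2 hiX

lemma pair_boost {I J X Y : Finset V} (hI : I.Nonempty) (hJ : J.Nonempty)
    (hX : X ⊆ I) (hY : Y ⊆ J) (hXne : X.Nonempty) (hYne : Y.Nonempty)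
    (π : Finpartition I) (σ : Finpartition J)
    (hπ : ∀ p ∈ π.parts, p ⊆ X ∨ p ⊆ I \ X)
    (hσ : ∀ q ∈ σ.parts, q ⊆ Y ∨ q ⊆ J \ Y) :
    eng G I J + ((X.card : ℝ) * Y.card) * (density G X Y - density G I J) ^ 2
      ≤ ∑ p ∈ π.parts, ∑ q ∈ σ.parts, eng G p q := by
  refine le_trans ?_ (sum_pairs_le G π (split hX) σ (split hY)
    (refines_split hX π hπ) (refines_split hY σ hσ))
  exact eng_boost G hI hJ (split hX) (split hY) (mem_split_left hX hXne)
    (mem_split_left hY hYne)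

noncomputable def energy (R : Finset (Finset V)) : ℝ := ∑ I ∈ R, ∑ J ∈ R, eng G I J

lemma energy_nonneg (R : Finset (Finset V)) : 0 ≤ energy G R :=
  Finset.sum_nonneg fun _ _ => Finset.sum_nonneg fun _ _ => eng_nonneg G _ _

lemma energy_le_sq (S : Finpartition (univ : Finset V)) :
    energy G S.parts ≤ (Fintype.card V : ℝ) ^ 2 := by
  calc energy G S.parts ≤ ∑ I ∈ S.parts, ∑ J ∈ S.parts, ((I.card : ℝ) * J.card) :=
      Finset.sum_le_sum fun I _ => Finset.sum_le_sum fun J _ => eng_le_w G I J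
    _ = ((univ : Finset V).card : ℝ) * (univ : Finset V).card := sum_w S S
    _ = (Fintype.card V : ℝ) ^ 2 := by rw [Finset.card_univ]; ring

lemma energy_mono (S T : Finpartition (univ : Finset V))
    (h : ∀ p ∈ T.parts, ∃ r ∈ S.parts, p ⊆ r) :
    energy G S.parts ≤ energy G T.parts := by
  unfold energy
  conv_rhs => rw [sum_pairs_eq G T S T S h h]
  exact Finset.sum_le_sum fun I hI => Finset.sum_le_sum fun J hJ =>
    eng_le_sum G (restr T S h I hI) (restr T S h J hJ)

open scoped Classical in
lemma increment (ε : ℝ) (hε : 0 < ε) (S : Finpartition (univ : Finset V))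
    (hirr : ¬ IsRegularPartition G ε S.parts) :
    ∃ T : Finpartition (univ : Finset V),
      (∀ p ∈ T.parts, ∃ r ∈ S.parts, p ⊆ r) ∧
      T.parts.card ≤ S.parts.card * 4 ^ S.parts.card ∧
      energy G S.parts + ε ^ 5 * (Fintype.card V : ℝ) ^ 2 < energy G T.parts := by
  have hwit : ∀ I J : Finset V, ∃ W : Finset V × Finset V,
      ¬ IsRegularPair G ε I J →
        W.1 ⊆ I ∧ W.2 ⊆ J ∧ ε * I.card < (W.1.card : ℝ) ∧ ε * J.card < (W.2.card : ℝ) ∧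
          ε < |density G W.1 W.2 - density G I J| := by
    intro I J
    by_cases h : IsRegularPair G ε I J
    · exact ⟨(∅, ∅), fun h' => absurd h h'⟩
    · unfold IsRegularPair at h
      push_neg at h
      obtain ⟨X, hXI, Y, hYJ, hXc, hYc, hd⟩ := h
      exact ⟨(X, Y), fun _ => ⟨hXI, hYJ, hXc, hYc, hd⟩⟩
  choose W hW using hwit
  set F : Finset V → Finset (Finset V) := fun I =>
    (S.parts.image fun J => (W I J).1) ∪ (S.parts.image fun J => (W J I).2) with hF
  set T := S.bind (fun I _ => Finpartition.atomise I (F I)) with hT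
  have hrefT : ∀ p ∈ T.parts, ∃ r ∈ S.parts, p ⊆ r := by
    intro p hp
    obtain ⟨A, hA, hpA⟩ := Finpartition.mem_bind.1 hp
    exact ⟨A, hA, (Finpartition.atomise A (F A)).le hpA⟩
  have hcard : T.parts.card ≤ S.parts.card * 4 ^ S.parts.card := by
    rw [hT, Finpartition.card_bind]
    calc ∑ A ∈ S.parts.attach, (Finpartition.atomise A.1 (F A.1)).parts.card
        ≤ ∑ _A ∈ S.parts.attach, 4 ^ S.parts.card := by
          refine Finset.sum_le_sum fun A _ => ?_
          have h1 : (F A.1).card ≤ 2 * S.parts.card := by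
            refine (card_union_le _ _).trans ?_
            have i1 := card_image_le (s := S.parts) (f := fun J => (W A.1 J).1)
            have i2 := card_image_le (s := S.parts) (f := fun J => (W J A.1).2)
            omega
          calc (Finpartition.atomise A.1 (F A.1)).parts.card ≤ 2 ^ (F A.1).card :=
              Finpartition.card_atomise_le
            _ ≤ 2 ^ (2 * S.parts.card) := Nat.pow_le_pow_right (by norm_num) h1
            _ = 4 ^ S.parts.card := by rw [pow_mul]; norm_num
      _ = S.parts.card * 4 ^ S.parts.card := by
          rw [Finset.sum_const, card_attach, smul_eq_mul]
  have hatom : ∀ I ∈ S.parts, ∀ p ∈ T.parts, p ⊆ I →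
      p ∈ (Finpartition.atomise I (F I)).parts := by
    intro I hI p hp hpI
    obtain ⟨A, hA, hpA⟩ := Finpartition.mem_bind.1 hp
    have hAI : A = I := by
      by_contra hne
      obtain ⟨x, hx⟩ := T.nonempty_of_mem_parts hp
      exact disjoint_left.1 (S.disjoint hA hI hne)
        ((Finpartition.atomise A (F A)).le hpA hx) (hpI hx)
    subst hAI
    exact hpA
  have key : ∀ I ∈ S.parts, ∀ J ∈ S.parts,
      eng G I J + ε ^ 4 * (if IsRegularPair G ε I J then 0 else ((I.card : ℝ) * J.card))
        ≤ ∑ p ∈ T.parts.filter (· ⊆ I), ∑ q ∈ T.parts.filter (· ⊆ J), eng G p q := by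
    intro I hI J hJ
    by_cases hreg : IsRegularPair G ε I J
    · rw [if_pos hreg, mul_zero, add_zero]
      exact eng_le_sum G (restr T S hrefT I hI) (restr T S hrefT J hJ)
    · rw [if_neg hreg]
      obtain ⟨hXI, hYJ, hXc, hYc, hd⟩ := hW I J hreg
      have hIne : I.Nonempty := S.nonempty_of_mem_parts hI
      have hJne : J.Nonempty := S.nonempty_of_mem_parts hJ
      have hXpos : (0:ℝ) < ((W I J).1.card : ℝ) :=
        lt_of_le_of_lt (by positivity) hXc
      have hYpos : (0:ℝ) < ((W I J).2.card : ℝ) :=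
        lt_of_le_of_lt (by positivity) hYc
      have hXne : (W I J).1.Nonempty := by
        rw [← card_pos]; exact_mod_cast hXpos
      have hYne : (W I J).2.Nonempty := by
        rw [← card_pos]; exact_mod_cast hYpos
      have hπ : ∀ p ∈ (restr T S hrefT I hI).parts, p ⊆ (W I J).1 ∨ p ⊆ I \ (W I J).1 := by
        intro p hp
        rw [restr_parts] at hp
        have hpT := (mem_filter.1 hp).1
        have hpI := (mem_filter.1 hp).2
        refine atom_sub (hatom I hI p hpT hpI) ?_
        exact Finset.mem_union_left _ (Finset.mem_image.2 ⟨J, hJ, rfl⟩)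
      have hσ : ∀ q ∈ (restr T S hrefT J hJ).parts, q ⊆ (W I J).2 ∨ q ⊆ J \ (W I J).2 := by
        intro q hq
        rw [restr_parts] at hq
        have hqT := (mem_filter.1 hq).1
        have hqJ := (mem_filter.1 hq).2
        refine atom_sub (hatom J hJ q hqT hqJ) ?_
        exact Finset.mem_union_right _ (Finset.mem_image.2 ⟨I, hI, rfl⟩)
      have hb := pair_boost G hIne hJne hXI hYJ hXne hYne
        (restr T S hrefT I hI) (restr T S hrefT J hJ) hπ hσ
      refine le_trans ?_ hb
      have h2 : ε ^ 2 ≤ (density G (W I J).1 (W I J).2 - density G I J) ^ 2 := by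
        have habs : ε ≤ |density G (W I J).1 (W I J).2 - density G I J| := hd.le
        calc ε ^ 2 ≤ |density G (W I J).1 (W I J).2 - density G I J| ^ 2 :=
            pow_le_pow_left₀ hε.le habs 2
          _ = _ := sq_abs _
      have h1 : ε * I.card * (ε * J.card) ≤ ((W I J).1.card : ℝ) * (W I J).2.card :=
        mul_le_mul hXc.le hYc.le (by positivity) (by positivity)
      have h3 : ε ^ 4 * ((I.card : ℝ) * J.card)
          ≤ ((W I J).1.card : ℝ) * (W I J).2.card
            * (density G (W I J).1 (W I J).2 - density G I J) ^ 2 := by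
        calc ε ^ 4 * ((I.card : ℝ) * J.card) = (ε * I.card * (ε * J.card)) * ε ^ 2 := by ring
          _ ≤ (((W I J).1.card : ℝ) * (W I J).2.card)
              * (density G (W I J).1 (W I J).2 - density G I J) ^ 2 :=
            mul_le_mul h1 h2 (by positivity) (by positivity)
      linarith
  refine ⟨T, hrefT, hcard, ?_⟩
  have hsum : energy G T.parts
      = ∑ I ∈ S.parts, ∑ J ∈ S.parts,
          ∑ p ∈ T.parts.filter (· ⊆ I), ∑ q ∈ T.parts.filter (· ⊆ J), eng G p q :=
    sum_pairs_eq G T S T S hrefT hrefT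
  have hmain : energy G S.parts
      + ε ^ 4 * (∑ I ∈ S.parts, ∑ J ∈ S.parts,
          (if IsRegularPair G ε I J then 0 else ((I.card : ℝ) * J.card)))
      ≤ energy G T.parts := by
    rw [hsum]
    unfold energy
    rw [Finset.mul_sum, ← Finset.sum_add_distrib]
    refine Finset.sum_le_sum fun I hI => ?_
    rw [Finset.mul_sum, ← Finset.sum_add_distrib]
    exact Finset.sum_le_sum fun J hJ => key I hI J hJ
  have hD : ε * (Fintype.card V : ℝ) ^ 2
      < ∑ I ∈ S.parts, ∑ J ∈ S.parts,
          (if IsRegularPair G ε I J then 0 else ((I.card : ℝ) * J.card)) := by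
    unfold IsRegularPartition at hirr
    push_neg at hirr
    exact hirr
  have hε4 : (0:ℝ) < ε ^ 4 := by positivity
  nlinarith [mul_lt_mul_of_pos_left hD hε4]

lemma chopN (b : ℕ) (hb : 0 < b) :
    ∀ (N : ℕ) (t : Finset V), t.card ≤ N → ∃ π : Finpartition t,
      (∀ p ∈ π.parts, p.card ≤ b) ∧ (π.parts.filter fun p => ¬ p.card = b).card ≤ 1 := by
  intro N
  induction N with
  | zero =>
    intro t ht
    have h0 : t = ∅ := card_eq_zero.1 (Nat.le_zero.1 ht)
    subst h0
    refine ⟨(Finpartition.empty (Finset V)).copy Finset.bot_eq_empty, ?_, ?_⟩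
    · intro p hp
      simp [Finpartition.copy] at hp
    · simp [Finpartition.copy]
  | succ N ih =>
    intro t ht
    by_cases hle : t.card ≤ b
    · by_cases h0 : t = ∅
      · subst h0
        refine ⟨(Finpartition.empty (Finset V)).copy Finset.bot_eq_empty, ?_, ?_⟩
        · intro p hp
          simp [Finpartition.copy] at hp
        · simp [Finpartition.copy]
      · refine ⟨Finpartition.indiscrete (by simpa [Finset.bot_eq_empty] using h0), ?_, ?_⟩
        · intro p hp
          rw [Finpartition.indiscrete_parts, mem_singleton] at hp
          subst hp; exact hle
        · refine (card_le_card (filter_subset _ _)).trans ?_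
          rw [Finpartition.indiscrete_parts, card_singleton]
    · push_neg at hle
      obtain ⟨s, hst, hscard⟩ := Finset.exists_subset_card_eq hle.le
      have hsne : s ≠ ⊥ := by
        rw [Finset.bot_eq_empty, ← Finset.nonempty_iff_ne_empty, ← card_pos, hscard]
        exact hb
      obtain ⟨π', h1, h2⟩ := ih (t \ s) (by
        rw [card_sdiff_of_subset hst, hscard]
        omega)
      refine ⟨π'.extend hsne Finset.sdiff_disjoint
        (by rw [Finset.sup_eq_union]; exact Finset.sdiff_union_of_subset hst), ?_, ?_⟩
      · intro p hp
        rw [Finpartition.extend_parts, mem_insert] at hp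
        rcases hp with rfl | hp
        · exact hscard.le
        · exact h1 p hp
      · rw [Finpartition.extend_parts, filter_insert, if_neg (by simp [hscard])]
        exact h2

lemma chop (b : ℕ) (hb : 0 < b) (t : Finset V) : ∃ π : Finpartition t,
    (∀ p ∈ π.parts, p.card ≤ b) ∧ (π.parts.filter fun p => ¬ p.card = b).card ≤ 1 :=
  chopN b hb t.card t le_rfl

lemma balance (ε : ℝ) (hε : 0 < ε) (hn : 0 < Fintype.card V)
    (R : Finpartition (univ : Finset V)) :
    ∃ S : Finpartition (univ : Finset V),
      (∀ p ∈ S.parts, ∃ r ∈ R.parts, p ⊆ r) ∧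
      IsBalanced ε S.parts ∧
      (S.parts.card : ℝ) ≤ (1 + ε⁻¹) * R.parts.card ∧
      energy G R.parts ≤ energy G S.parts := by
  classical
  set n := Fintype.card V with hndef
  have huniv_ne : (univ : Finset V) ≠ ⊥ := by
    rw [Finset.bot_eq_empty, ← Finset.nonempty_iff_ne_empty, ← card_pos, Finset.card_univ]
    exact hn
  have hy : 0 < R.parts.card := card_pos.2 (R.parts_nonempty huniv_ne)
  set y := R.parts.card with hydef
  have hypos : (0:ℝ) < (y:ℝ) := by exact_mod_cast hy
  have hnpos : (0:ℝ) < (n:ℝ) := by exact_mod_cast hn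
  set b := ⌈ε * n / y⌉₊ with hbdef
  have hb : 0 < b := Nat.ceil_pos.2 (by positivity)
  have hbpos : (0:ℝ) < (b:ℝ) := by exact_mod_cast hb
  choose chopF hchop1 hchop2 using fun t : Finset V => chop b hb t
  set S := R.bind (fun I _ => chopF I) with hS
  have href : ∀ p ∈ S.parts, ∃ r ∈ R.parts, p ⊆ r := by
    intro p hp
    obtain ⟨A, hA, hpA⟩ := Finpartition.mem_bind.1 hp
    exact ⟨A, hA, (chopF A).le hpA⟩
  have hSle : ∀ p ∈ S.parts, p.card ≤ b := by
    intro p hp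
    obtain ⟨A, _, hpA⟩ := Finpartition.mem_bind.1 hp
    exact hchop1 A p hpA
  have hbad : (S.parts.filter fun p => ¬ p.card = b).card ≤ y := by
    rw [hS, Finpartition.bind_parts, filter_biUnion]
    refine (Finset.card_biUnion_le).trans ?_
    calc ∑ A ∈ R.parts.attach, ((chopF A.1).parts.filter fun p => ¬ p.card = b).card
        ≤ ∑ _A ∈ R.parts.attach, 1 := Finset.sum_le_sum fun A _ => hchop2 A.1
      _ = y := by rw [Finset.sum_const, card_attach, smul_eq_mul, mul_one]
  set C := S.parts.filter (fun p => p.card = b) with hC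
  set bad := S.parts.filter (fun p => ¬ p.card = b) with hbaddef
  have hCsum : ∑ p ∈ C, p.card = C.card * b := by
    rw [Finset.sum_congr rfl (fun p hp => (mem_filter.1 hp).2), Finset.sum_const, smul_eq_mul]
  have hsum_all : ∑ p ∈ S.parts, p.card = n := by
    rw [S.sum_card_parts, Finset.card_univ]
  have hsum_split : ∑ p ∈ C, p.card + ∑ p ∈ bad, p.card = n := by
    rw [← hsum_all, hC, hbaddef]
    exact Finset.sum_filter_add_sum_filter_not _ _ _
  have hgood_le : C.card * b ≤ n := by
    rw [← hCsum, ← hsum_all, hC]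
    exact Finset.sum_le_sum_of_subset (filter_subset _ _)
  -- card bound
  have hcards : (S.parts.card : ℝ) ≤ (1 + ε⁻¹) * y := by
    have hsplitc : S.parts.card = C.card + bad.card := by
      rw [hC, hbaddef]
      exact (Finset.card_filter_add_card_filter_not _).symm
    have hCb : (C.card : ℝ) ≤ (n:ℝ) / b := by
      rw [le_div_iff₀ hbpos]
      exact_mod_cast hgood_le
    have h6 : ε * n / y ≤ (b:ℝ) := Nat.le_ceil _
    have h5 : (0:ℝ) < ε * n / y := by positivity
    have hnb : (n:ℝ) / b ≤ ε⁻¹ * y := by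
      calc (n:ℝ)/b ≤ (n:ℝ)/(ε * n / y) := by
            apply div_le_div_of_nonneg_left hnpos.le h5 h6
        _ = ε⁻¹ * y := by field_simp
    have hbady : (bad.card : ℝ) ≤ (y:ℝ) := by exact_mod_cast hbad
    rw [hsplitc]
    push_cast
    linarith
  -- balancedness
  have hbalanced : IsBalanced ε S.parts := by
    refine ⟨C, filter_subset _ _, ?_, ?_⟩
    · intro X hX Y hY
      rw [(mem_filter.1 hX).2, (mem_filter.1 hY).2]
    · have hdisjC : (C : Set (Finset V)).PairwiseDisjoint id := by
        intro p hp q hq hpq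
        exact S.disjoint (filter_subset _ _ hp) (filter_subset _ _ hq) hpq
      have hcsup : (C.sup id).card = ∑ p ∈ C, p.card := by
        rw [Finset.sup_eq_biUnion]
        exact Finset.card_biUnion fun p hp q hq hpq => hdisjC hp hq hpq
      have hcompl : (Finset.univ \ C.sup id).card = ∑ p ∈ bad, p.card := by
        rw [card_sdiff_of_subset (subset_univ _), Finset.card_univ, hcsup]
        omega
      have hbadsum : ∑ p ∈ bad, p.card ≤ bad.card * (b - 1) := by
        refine Finset.sum_le_card_nsmul _ _ _ fun p hp => ?_
        have h1 := hSle p (filter_subset _ _ hp)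
        have h2 := (mem_filter.1 hp).2
        omega
      rw [hcompl]
      have hlt : (b:ℝ) < ε * n / y + 1 := Nat.ceil_lt_add_one (by positivity)
      have hcast : ((b - 1 : ℕ) : ℝ) = (b:ℝ) - 1 := by
        rw [Nat.cast_sub hb]
        norm_num
      have hbadY : (bad.card : ℝ) ≤ (y:ℝ) := by exact_mod_cast hbad
      calc ((∑ p ∈ bad, p.card : ℕ) : ℝ) ≤ ((bad.card * (b - 1) : ℕ) : ℝ) := by
            exact_mod_cast hbadsum
        _ = (bad.card : ℝ) * ((b:ℝ) - 1) := by push_cast [hcast]; ring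
        _ ≤ (y:ℝ) * (ε * n / y) := by
            apply mul_le_mul hbadY (by linarith) ?_ hypos.le
            · have : (1:ℝ) ≤ (b:ℝ) := by exact_mod_cast hb
              linarith
        _ = ε * n := by field_simp
  exact ⟨S, href, hbalanced, hcards, energy_mono G R S href⟩

lemma boundFun_zero (ε : ℝ) : boundFun ε 0 = 0 := by
  simp [boundFun]

lemma le_boundFun {ε x : ℝ} (hε : 0 < ε) (hx : 0 ≤ x) : x ≤ boundFun ε x := by
  unfold boundFun
  have h1 : (1:ℝ) ≤ (4:ℝ) ^ x := by
    calc (1:ℝ) = (4:ℝ) ^ (0:ℝ) := (Real.rpow_zero 4).symm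
      _ ≤ (4:ℝ) ^ x := Real.rpow_le_rpow_of_exponent_le (by norm_num) hx
  have h2 : (1:ℝ) ≤ 1 + ε⁻¹ := by
    have := inv_pos.2 hε
    linarith
  nlinarith [mul_le_mul_of_nonneg_left h1 hx, mul_le_mul_of_nonneg_right h2 hx]

lemma boundFun_mono {ε x y : ℝ} (hε : 0 < ε) (hx : 0 ≤ x) (hxy : x ≤ y) :
    boundFun ε x ≤ boundFun ε y := by
  unfold boundFun
  have h4 : (4:ℝ) ^ x ≤ (4:ℝ) ^ y := Real.rpow_le_rpow_of_exponent_le (by norm_num) hxy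
  have h0 : (0:ℝ) < (4:ℝ) ^ x := Real.rpow_pos_of_pos (by norm_num) x
  have he : (0:ℝ) ≤ 1 + ε⁻¹ := by positivity
  have hy : 0 ≤ y := hx.trans hxy
  have := mul_le_mul_of_nonneg_left hxy he
  apply mul_le_mul this h4 h0.le (by positivity)

end SRLwork


open SRLwork in
open scoped Classical in
/-- **Szemerédi's regularity lemma.** -/
theorem szemeredi_regularity_lemma {V : Type*} [Fintype V] [DecidableEq V]
    (ε : ℝ) (hε : 0 < ε) (G : SimpleGraph V) [DecidableRel G.Adj]
    (P : Finset (Finset V)) (hP : IsPartition P) :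
    ∃ Q : Finset (Finset V), IsPartition Q ∧ IsRefinement Q P ∧
      IsBalanced ε Q ∧ IsRegularPartition G ε Q ∧
      (Q.card : ℝ) ≤ (boundFun ε)^[⌊(ε ^ 5)⁻¹⌋₊] ((1 + ε⁻¹) * P.card) := by
  classical
  rcases Nat.eq_zero_or_pos (Fintype.card V) with hn | hn
  · -- the empty case
    have hVempty : (univ : Finset V) = ∅ := by
      rw [← Finset.card_eq_zero, Finset.card_univ]; exact hn
    have hPempty : P = ∅ := by
      rw [Finset.eq_empty_iff_forall_notMem]
      intro I hI
      obtain ⟨x, hx⟩ := hP.1 I hI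
      exact absurd (mem_univ x) (by rw [hVempty]; exact notMem_empty x)
    refine ⟨∅, ⟨by simp, by simp, by rw [hVempty]; simp⟩, ?_, ?_, ?_, ?_⟩
    · intro J hJ; simp at hJ
    · exact ⟨∅, by simp, by simp, by simp [hVempty, hn]⟩
    · unfold IsRegularPartition
      simp [hn]
    · rw [hPempty]
      simp only [Finset.card_empty, Nat.cast_zero, mul_zero, Finset.card_empty]
      rw [Function.iterate_fixed (boundFun_zero ε)]
  · -- the main case
    have hPD : (P : Set (Finset V)).PairwiseDisjoint id :=
      fun I hI J hJ hne => hP.2.1 I hI J hJ hne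
    let R0 : Finpartition (univ : Finset V) :=
      { parts := P
        supIndep := Finset.supIndep_iff_pairwiseDisjoint.2 hPD
        sup_parts := hP.2.2
        bot_notMem := fun h => (hP.1 ∅ (by simpa using h)).ne_empty rfl }
    set m := ⌊(ε ^ 5)⁻¹⌋₊ with hmdef
    set x0 := (1 + ε⁻¹) * (P.card : ℝ) with hx0def
    set n := Fintype.card V with hndef
    have main : ∀ j : ℕ, ∃ S : Finpartition (univ : Finset V),
        (∀ p ∈ S.parts, ∃ r ∈ P, p ⊆ r) ∧ IsBalanced ε S.parts ∧
        (S.parts.card : ℝ) ≤ (boundFun ε)^[j] x0 ∧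
        (IsRegularPartition G ε S.parts ∨
          (j : ℝ) * (ε ^ 5 * (n : ℝ) ^ 2) ≤ energy G S.parts) := by
      intro j
      induction j with
      | zero =>
        obtain ⟨S, h1, h2, h3, h4⟩ := balance G ε hε hn R0
        refine ⟨S, ?_, h2, ?_, Or.inr ?_⟩
        · intro p hp
          obtain ⟨r, hr, hpr⟩ := h1 p hp
          exact ⟨r, hr, hpr⟩
        · simpa using h3
        · simpa using energy_nonneg G S.parts
      | succ j ih =>
        obtain ⟨S, h1, h2, h3, h4⟩ := ih
        have hiter_nonneg : (0:ℝ) ≤ (boundFun ε)^[j] x0 :=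
          le_trans (Nat.cast_nonneg _) h3
        by_cases hreg : IsRegularPartition G ε S.parts
        · refine ⟨S, h1, h2, ?_, Or.inl hreg⟩
          rw [Function.iterate_succ_apply']
          exact h3.trans (le_boundFun hε hiter_nonneg)
        · have hen : (j : ℝ) * (ε ^ 5 * (n : ℝ) ^ 2) ≤ energy G S.parts :=
            h4.resolve_left hreg
          obtain ⟨T, hT1, hT2, hT3⟩ := increment G ε hε S hreg
          obtain ⟨S', hS1, hS2, hS3, hS4⟩ := balance G ε hε hn T
          refine ⟨S', ?_, hS2, ?_, Or.inr ?_⟩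
          · intro p hp
            obtain ⟨t, ht, hpt⟩ := hS1 p hp
            obtain ⟨r, hr, htr⟩ := hT1 t ht
            obtain ⟨rr, hrr, hrrr⟩ := h1 r hr
            exact ⟨rr, hrr, hpt.trans (htr.trans hrrr)⟩
          · rw [Function.iterate_succ_apply']
            have hk : (T.parts.card : ℝ)
                ≤ (S.parts.card : ℝ) * (4:ℝ) ^ ((S.parts.card : ℕ) : ℝ) := by
              calc (T.parts.card : ℝ)
                  ≤ ((S.parts.card * 4 ^ S.parts.card : ℕ) : ℝ) := by exact_mod_cast hT2
                _ = (S.parts.card : ℝ) * (4:ℝ) ^ ((S.parts.card : ℕ) : ℝ) := by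
                    push_cast
                    rw [Real.rpow_natCast]
            calc (S'.parts.card : ℝ) ≤ (1 + ε⁻¹) * T.parts.card := hS3
              _ ≤ (1 + ε⁻¹) * ((S.parts.card : ℝ) * (4:ℝ) ^ ((S.parts.card : ℕ) : ℝ)) :=
                  mul_le_mul_of_nonneg_left hk (by positivity)
              _ = boundFun ε (S.parts.card : ℝ) := by rw [boundFun, mul_assoc]
              _ ≤ boundFun ε ((boundFun ε)^[j] x0) :=
                  boundFun_mono hε (Nat.cast_nonneg _) h3
          · calc ((j + 1 : ℕ) : ℝ) * (ε ^ 5 * (n : ℝ) ^ 2)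
                = (j : ℝ) * (ε ^ 5 * (n : ℝ) ^ 2) + ε ^ 5 * (n : ℝ) ^ 2 := by push_cast; ring
              _ ≤ energy G S.parts + ε ^ 5 * (n : ℝ) ^ 2 := by linarith
              _ ≤ energy G T.parts := hT3.le
              _ ≤ energy G S'.parts := hS4
    obtain ⟨S, h1, h2, h3, h4⟩ := main m
    have hreg : IsRegularPartition G ε S.parts := by
      rcases h4 with h | hen
      · exact h
      · by_contra hirr
        obtain ⟨T, hT1, hT2, hT3⟩ := increment G ε hε S hirr
        have hle := energy_le_sq G T
        have hm1 : ((ε ^ 5)⁻¹ : ℝ) < (m : ℝ) + 1 := Nat.lt_floor_add_one _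
        have hε5 : (0:ℝ) < ε ^ 5 := by positivity
        have hn2 : (0:ℝ) < (n : ℝ) ^ 2 := by
          have : (0:ℝ) < (n : ℝ) := by exact_mod_cast hn
          positivity
        have h1' : (1:ℝ) < ((m : ℝ) + 1) * ε ^ 5 := by
          have := mul_lt_mul_of_pos_right hm1 hε5
          rwa [inv_mul_cancel₀ (ne_of_gt hε5)] at this
        have h2' : (1:ℝ) * (n : ℝ) ^ 2 < ((m : ℝ) + 1) * ε ^ 5 * (n : ℝ) ^ 2 :=
          mul_lt_mul_of_pos_right h1' hn2
        have h3' : ((m : ℝ) + 1) * ε ^ 5 * (n : ℝ) ^ 2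
            = (m : ℝ) * (ε ^ 5 * (n : ℝ) ^ 2) + ε ^ 5 * (n : ℝ) ^ 2 := by ring
        have hle' : energy G T.parts ≤ (n : ℝ) ^ 2 := hle
        linarith
    refine ⟨S.parts, ?_, h1, h2, hreg, h3⟩
    exact ⟨fun I hI => S.nonempty_of_mem_parts hI,
      fun I hI J hJ hne => S.disjoint hI hJ hne, S.sup_parts⟩
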